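/- For real α, β ≤ 0 with max(α,β) = 0 and idempotent probability measures μ₁, μ₂ on a compact Hausdorff space X, the functional α ⊙ μ₁ ⊕ β ⊙ μ₂ : φ ↦ max(α + μ₁(φ), β + μ₂(φ)) is again an idempotent probability measure, and supp(α ⊙ μ₁ ⊕ β ⊙ μ₂) = supp μ₁ ∪ supp μ₂. -/

import Mathlib

open scoped BigOperators

/-- An idempotent probability measure: normality on constants, max-plus homogeneity
(addition of constants), and max-additivity (pointwise max ↦ max). -/
def IsIdemProb {X : Type*} [TopologicalSpace X] (μ : C(X, ℝ) → ℝ) : Prop :=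
  (∀ c : ℝ, μ (ContinuousMap.const X c) = c) ∧
  (∀ (c : ℝ) (φ : C(X, ℝ)), μ (ContinuousMap.const X c + φ) = c + μ φ) ∧
  (∀ φ ψ : C(X, ℝ), μ (φ ⊔ ψ) = max (μ φ) (μ ψ))

/-- The support of a functional μ : the intersection of all closed sets F such that
μ φ depends only on φ|_F. -/
def suppI {X : Type*} [TopologicalSpace X] (μ : C(X, ℝ) → ℝ) : Set X :=
  ⋂₀ {F : Set X | IsClosed F ∧ ∀ φ ψ : C(X, ℝ), (∀ x ∈ F, φ x = ψ x) → μ φ = μ ψ}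

/-- The space I(X) of idempotent probability measures with the topology of
pointwise convergence. -/
abbrev IPM (X : Type*) [TopologicalSpace X] : Type _ :=
  {μ : C(X, ℝ) → ℝ // IsIdemProb μ}

/-- S_I(A) = {μ ∈ I(X) : supp μ ∩ A ≠ ∅}. -/
def SI {X : Type*} [TopologicalSpace X] (A : Set X) : Set (IPM X) :=
  {μ | (suppI μ.1 ∩ A).Nonempty}

lemma IsIdemProb.mono {X : Type*} [TopologicalSpace X] {μ : C(X, ℝ) → ℝ}
    (hμ : IsIdemProb μ) {φ ψ : C(X, ℝ)} (h : φ ≤ ψ) : μ φ ≤ μ ψ := by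
  have : φ ⊔ ψ = ψ := sup_eq_right.2 h
  have h2 := hμ.2.2 φ ψ
  rw [this] at h2
  rw [h2]; exact le_max_left _ _

/-- Key bump lemma: if μψ < μφ with ψ ≤ φ, there is a bump u vanishing where φ = ψ
such that μ(φ + s•u) ≥ μφ + s for all s ≥ 0. -/
lemma exists_bump {X : Type*} [TopologicalSpace X] [CompactSpace X] [T2Space X]
    {μ : C(X, ℝ) → ℝ} (hμ : IsIdemProb μ) {φ ψ : C(X, ℝ)} (hle : ψ ≤ φ)
    (hgap : μ ψ < μ φ) :
    ∃ u : C(X, ℝ), (∀ x, 0 ≤ u x) ∧ (∀ x, φ x = ψ x → u x = 0) ∧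
      ∀ s : ℝ, 0 ≤ s → μ φ + s ≤ μ (φ + s • u) := by
  set η : ℝ := (μ φ - μ ψ) / 2 with hη
  have hηpos : 0 < η := by simp [hη]; linarith
  set E : Set X := (φ - ψ) ⁻¹' Set.Iic (η / 2) with hE
  set D : Set X := (φ - ψ) ⁻¹' Set.Ici η with hD
  have hEc : IsClosed E := isClosed_Iic.preimage (φ - ψ).continuous
  have hDc : IsClosed D := isClosed_Ici.preimage (φ - ψ).continuous
  have hdisj : Disjoint E D := by
    rw [Set.disjoint_left]
    intro x hx hx'
    simp only [hE, hD, Set.mem_preimage, Set.mem_Iic, Set.mem_Ici] at hx hx'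
    linarith
  obtain ⟨u, hu0, hu1, hmem⟩ := exists_continuous_zero_one_of_isClosed hEc hDc hdisj
  refine ⟨u, fun x => (hmem x).1, ?_, ?_⟩
  · intro x hx
    have : x ∈ E := by
      simp only [hE, Set.mem_preimage, Set.mem_Iic, ContinuousMap.sub_apply, hx, sub_self]
      linarith
    simpa using hu0 this
  · intro s hs
    -- pointwise: φ ≤ (const η + ψ) ⊔ (const (-s) + (φ + s•u))
    have hpt : φ ≤ (ContinuousMap.const X η + ψ) ⊔ (ContinuousMap.const X (-s) + (φ + s • u)) := by
      rw [ContinuousMap.le_def]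
      intro x
      simp only [ContinuousMap.sup_apply, ContinuousMap.add_apply, ContinuousMap.const_apply,
        ContinuousMap.smul_apply, smul_eq_mul, le_sup_iff]
      by_cases hx : φ x - ψ x < η
      · left; linarith
      · right
        have hxD : x ∈ D := by
          simp only [hD, Set.mem_preimage, Set.mem_Ici, ContinuousMap.sub_apply]
          linarith
        have := hu1 hxD
        simp only [ContinuousMap.one_apply, Pi.one_apply] at this
        rw [this]; ring_nf; linarith
    have := hμ.mono hpt
    rw [hμ.2.2, hμ.2.1, hμ.2.1] at this
    rcases le_max_iff.1 this with h | h
    · exfalso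
      have : η < μ φ - μ ψ := by simp [hη]; linarith
      linarith
    · linarith

/-- If `c + μ φ ≤ ν φ` for all φ and F determines ν, then F determines μ. -/
lemma determines_of_le {X : Type*} [TopologicalSpace X] [CompactSpace X] [T2Space X]
    {μ ν : C(X, ℝ) → ℝ} (hμ : IsIdemProb μ) (c : ℝ) (hc : ∀ φ, c + μ φ ≤ ν φ)
    {F : Set X} (hF : ∀ φ ψ : C(X, ℝ), (∀ x ∈ F, φ x = ψ x) → ν φ = ν ψ) :
    ∀ φ ψ : C(X, ℝ), (∀ x ∈ F, φ x = ψ x) → μ φ = μ ψ := by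
  have aux : ∀ φ ψ : C(X, ℝ), ψ ≤ φ → (∀ x ∈ F, φ x = ψ x) → μ φ = μ ψ := by
    intro φ ψ hle heq
    by_contra hne
    have hlt : μ ψ < μ φ := lt_of_le_of_ne (hμ.mono hle) (Ne.symm hne)
    obtain ⟨u, hu0, huz, hkey⟩ := exists_bump hμ hle hlt
    set s : ℝ := max 0 (ν ψ - c - μ φ + 1) with hsdef
    have hs0 : 0 ≤ s := le_max_left _ _
    have hs1 : ν ψ - c - μ φ + 1 ≤ s := le_max_right _ _
    set ρ : C(X, ℝ) := ψ ⊔ (φ + s • u) with hρ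
    have hρF : ∀ x ∈ F, ρ x = ψ x := by
      intro x hx
      have h1 : φ x = ψ x := heq x hx
      have h2 : u x = 0 := huz x h1
      simp [hρ, ContinuousMap.sup_apply, h1, h2]
    have hνρ : ν ρ = ν ψ := hF ρ ψ hρF
    have h3 : c + μ ρ ≤ ν ρ := hc ρ
    have h4 : μ (φ + s • u) ≤ μ ρ := by
      rw [hρ, hμ.2.2]; exact le_max_right _ _
    have h5 := hkey s hs0
    linarith
  intro φ ψ heq
  have h1 : μ (φ ⊔ ψ) = μ φ := by
    refine aux (φ ⊔ ψ) φ le_sup_left fun x hx => ?_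
    simp [ContinuousMap.sup_apply, heq x hx]
  have h2 : μ (φ ⊔ ψ) = μ ψ := by
    refine aux (φ ⊔ ψ) ψ le_sup_right fun x hx => ?_
    simp [ContinuousMap.sup_apply, heq x hx]
  rw [← h1, h2]

theorem maxPlus_combination_isIdemProb_supp {X : Type*} [TopologicalSpace X]
    [CompactSpace X] [T2Space X] (μ₁ μ₂ : C(X, ℝ) → ℝ)
    (hμ₁ : IsIdemProb μ₁) (hμ₂ : IsIdemProb μ₂)
    (a b : ℝ) (ha : a ≤ 0) (hb : b ≤ 0) (hab : max a b = 0) :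
    IsIdemProb (fun φ : C(X, ℝ) => max (a + μ₁ φ) (b + μ₂ φ)) ∧
    suppI (fun φ : C(X, ℝ) => max (a + μ₁ φ) (b + μ₂ φ)) = suppI μ₁ ∪ suppI μ₂ := by
  set ν : C(X, ℝ) → ℝ := fun φ => max (a + μ₁ φ) (b + μ₂ φ) with hν
  have hIdem : IsIdemProb ν := by
    refine ⟨fun c => ?_, fun c φ => ?_, fun φ ψ => ?_⟩
    · simp only [hν, hμ₁.1, hμ₂.1]
      rw [max_add_add_right, hab, zero_add]
    · simp only [hν, hμ₁.2.1, hμ₂.2.1]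
      rw [add_left_comm a c, add_left_comm b c, max_add_add_left]
    · simp only [hν, hμ₁.2.2, hμ₂.2.2]
      rw [← max_add_add_left, ← max_add_add_left]
      exact sup_sup_sup_comm _ _ _ _
  refine ⟨hIdem, ?_⟩
  apply Set.Subset.antisymm
  · -- suppI ν ⊆ suppI μ₁ ∪ suppI μ₂
    intro x hx
    by_contra hx'
    simp only [Set.mem_union, not_or] at hx'
    obtain ⟨h1, h2⟩ := hx'
    simp only [suppI, Set.mem_sInter, Set.mem_setOf_eq, not_forall] at h1 h2
    obtain ⟨F₁, ⟨hF₁c, hF₁⟩, hxF₁⟩ := h1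
    obtain ⟨F₂, ⟨hF₂c, hF₂⟩, hxF₂⟩ := h2
    have : x ∈ F₁ ∪ F₂ := by
      refine hx (F₁ ∪ F₂) ⟨hF₁c.union hF₂c, fun φ ψ heq => ?_⟩
      have e1 : μ₁ φ = μ₁ ψ := hF₁ φ ψ fun y hy => heq y (Or.inl hy)
      have e2 : μ₂ φ = μ₂ ψ := hF₂ φ ψ fun y hy => heq y (Or.inr hy)
      simp [hν, e1, e2]
    rcases this with h | h
    · exact hxF₁ h
    · exact hxF₂ h
  · -- suppI μ₁ ∪ suppI μ₂ ⊆ suppI ν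
    intro x hx
    intro F hFmem
    obtain ⟨hFc, hF⟩ := hFmem
    rcases hx with hx | hx
    · exact hx F ⟨hFc, determines_of_le hμ₁ a (fun φ => le_max_left _ _) hF⟩
    · exact hx F ⟨hFc, determines_of_le hμ₂ b (fun φ => le_max_right _ _) hF⟩
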